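/- Suppose s ≥ 1 and fix k ∈ {1, …, N}. Let V : [0,∞) → ℝ^N be a solution of the volume-scavenging system with V_j(0) ≥ 0 for all 1 ≤ j ≤ N, (1/N) Σ_{j=1}^N V_j(0) = V̄ > 0, and V_k(0) ≤ 1. Then V_k(t) ≤ 1 for all t ≥ 0. -/

import Mathlib

/-- Droplet volume as a function of height: v(h) = h(h²+3)/4. -/
noncomputable def vol (h : ℝ) : ℝ := h * (h ^ 2 + 3) / 4

/-- Droplet pressure as a function of height: p(h) = 4h/(h²+1). -/
noncomputable def pres (h : ℝ) : ℝ := 4 * h / (h ^ 2 + 1)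

/-- Pressure as a function of volume: P(V) = p(h) where v(h) = V
(v is a strictly increasing bijection of ℝ, so its inverse is well defined). -/
noncomputable def Pfun (V : ℝ) : ℝ := pres (Function.invFun vol V)

/-- Δ_s(x) = |x|^s sgn(x). -/
noncomputable def Ds (s x : ℝ) : ℝ := |x| ^ s * Real.sign x

lemma vol_strictMono : StrictMono vol := by
  intro a b hab
  unfold vol
  have : 0 < b - a := sub_pos.2 hab
  nlinarith [sq_nonneg (a + b), sq_nonneg a, sq_nonneg b, sq_nonneg (a - b)]

lemma vol_surj : Function.Surjective vol := by
  have hc : Continuous vol := by unfold vol; continuity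
  refine hc.surjective ?_ ?_
  · apply Filter.tendsto_atTop_mono' _ _ Filter.tendsto_id
    filter_upwards [Filter.eventually_ge_atTop (1 : ℝ)] with h hh
    show h ≤ vol h
    unfold vol; nlinarith
  · apply Filter.tendsto_atBot_mono' _ _ Filter.tendsto_id
    filter_upwards [Filter.eventually_le_atBot (-1 : ℝ)] with h hh
    show vol h ≤ h
    unfold vol; nlinarith

lemma pres_le_two (h : ℝ) : pres h ≤ 2 := by
  unfold pres
  rw [div_le_iff₀ (by positivity)]
  nlinarith [sq_nonneg (h - 1)]

lemma Pfun_le_two (V : ℝ) : Pfun V ≤ 2 := pres_le_two _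

lemma Pfun_key {V : ℝ} (hV : 1 ≤ V) :
    0 ≤ 2 - Pfun V ∧ 2 - Pfun V ≤ 2 ∧ 2 - Pfun V ≤ (4 / 3) * (V - 1) := by
  set h := Function.invFun vol V with hh
  have hvol : vol h = V := Function.invFun_eq (vol_surj V)
  have h1 : (1 : ℝ) ≤ h := by
    by_contra hlt
    push_neg at hlt
    have := vol_strictMono hlt
    have v1 : vol 1 = 1 := by unfold vol; norm_num
    rw [hvol, v1] at this
    linarith
  have hP : Pfun V = pres h := rfl
  have hpos : (0 : ℝ) < h ^ 2 + 1 := by positivity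
  refine ⟨by linarith [Pfun_le_two V], ?_, ?_⟩
  · rw [hP]; unfold pres
    have : 0 ≤ 4 * h / (h ^ 2 + 1) := by positivity
    linarith
  · rw [hP, ← hvol]; unfold pres vol
    have e : 2 - 4 * h / (h ^ 2 + 1) = 2 * (h - 1) ^ 2 / (h ^ 2 + 1) := by
      field_simp; ring
    have h10 : 0 ≤ h - 1 := by linarith
    have s1 : 2 * (h - 1) ^ 2 / (h ^ 2 + 1) ≤ 2 * (h - 1) := by
      rw [div_le_iff₀ hpos]
      nlinarith [mul_nonneg h10 (show (0:ℝ) ≤ h ^ 2 - h + 2 by nlinarith [sq_nonneg (h - 1)])]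
    have s2 : (3 / 2) * (h - 1) ≤ h * (h ^ 2 + 3) / 4 - 1 := by
      nlinarith [mul_nonneg (sq_nonneg (h - 1)) (show (0:ℝ) ≤ h + 2 by linarith)]
    rw [e]
    linarith

lemma Ds_le {s x y : ℝ} (hs : 1 ≤ s) (hxy : x ≤ y) (hy : 0 ≤ y) : Ds s x ≤ y ^ s := by
  unfold Ds
  rcases lt_trichotomy x 0 with hx | hx | hx
  · rw [Real.sign_of_neg hx]
    have : (0:ℝ) ≤ |x| ^ s := Real.rpow_nonneg (abs_nonneg x) s
    have hy' : (0:ℝ) ≤ y ^ s := Real.rpow_nonneg hy s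
    nlinarith
  · simp [hx, Real.rpow_nonneg hy s]
  · rw [Real.sign_of_pos hx, mul_one, abs_of_pos hx]
    exact Real.rpow_le_rpow hx.le hxy (by linarith)

lemma rpow_bound {s u a : ℝ} (hs : 1 ≤ s) (ha0 : 0 ≤ a) (ha2 : a ≤ 2)
    (hau : a ≤ (4 / 3) * u) : a ^ s ≤ (4 / 3) * 2 ^ s * u := by
  have hu : 0 ≤ u := by nlinarith
  have h2s : (1 : ℝ) ≤ (2:ℝ) ^ s := Real.one_le_rpow (by norm_num) (by linarith)
  rcases le_or_gt a 1 with h1 | h1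
  · have haa : a ^ s ≤ a := by
      rcases eq_or_lt_of_le ha0 with h0 | h0
      · rw [← h0, Real.zero_rpow (by linarith)]
      · calc a ^ s ≤ a ^ (1:ℝ) := Real.rpow_le_rpow_of_exponent_ge h0 h1 hs
          _ = a := Real.rpow_one a
    nlinarith
  · have h34 : (3:ℝ)/4 < u := by nlinarith
    have : a ^ s ≤ (2:ℝ) ^ s := Real.rpow_le_rpow ha0 ha2 (by linarith)
    nlinarith [Real.rpow_nonneg (show (0:ℝ) ≤ 2 by norm_num) s]

theorem stmt12 (N : ℕ) (hN : 2 ≤ N) (s : ℝ) (hs : 1 ≤ s)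
    (c : Fin N → Fin N → ℝ)
    (hsymm : ∀ i j, c i j = c j i)
    (hnonneg : ∀ i j, 0 ≤ c i j)
    (hdiag : ∀ i, c i i = 0)
    (hconn : (SimpleGraph.fromRel (fun i j => 0 < c i j)).Connected)
    (k : Fin N)
    (Vbar : ℝ) (hVbar : 0 < Vbar)
    (V : ℝ → Fin N → ℝ)
    (hsol : ∀ t ∈ Set.Ici (0 : ℝ), ∀ j, HasDerivWithinAt (fun τ => V τ j)
      (∑ i, c i j * Ds s (Pfun (V t i) - Pfun (V t j))) (Set.Ici (0 : ℝ)) t)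
    (hinit : ∀ j, 0 ≤ V 0 j)
    (hmean : (1 / (N : ℝ)) * ∑ j, V 0 j = Vbar)
    (hk : V 0 k ≤ 1) :
    ∀ t ∈ Set.Ici (0 : ℝ), V t k ≤ 1 := by
  intro t ht
  rw [Set.mem_Ici] at ht
  set S : ℝ := ∑ i, c i k with hS
  have hSnn : 0 ≤ S := Finset.sum_nonneg fun i _ => hnonneg i k
  set K : ℝ := S * ((4 / 3) * 2 ^ s) + 1 with hK
  have h2s : (0 : ℝ) < (2:ℝ) ^ s := Real.rpow_pos_of_pos (by norm_num) s
  -- Main estimate via barrier functions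
  have main : ∀ ε > (0:ℝ), V t k ≤ 1 + ε * Real.exp (K * t) := by
    intro ε hε
    have hB : ∀ x : ℝ, HasDerivAt (fun x => 1 + ε * Real.exp (K * x))
        (ε * (Real.exp (K * x) * K)) x := by
      intro x
      have h1 : HasDerivAt (fun x => Real.exp (K * x)) (Real.exp (K * x) * K) x := by
        simpa [Function.comp_def] using (Real.hasDerivAt_exp (K * x)).comp x ((hasDerivAt_id x).const_mul K)
      exact (h1.const_mul ε).const_add 1
    have hf : ContinuousOn (fun τ => V τ k) (Set.Icc 0 t) := by
      intro x hx
      exact ((hsol x hx.1 k).continuousWithinAt).mono Set.Icc_subset_Ici_self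
    have hf' : ∀ x ∈ Set.Ico (0:ℝ) t, HasDerivWithinAt (fun τ => V τ k)
        (∑ i, c i k * Ds s (Pfun (V x i) - Pfun (V x k))) (Set.Ici x) x := by
      intro x hx
      exact (hsol x hx.1 k).mono (Set.Ici_subset_Ici.2 hx.1)
    have ha : V 0 k ≤ 1 + ε * Real.exp (K * 0) := by
      have : 0 < Real.exp (K * 0) := Real.exp_pos _
      nlinarith
    have bound : ∀ x ∈ Set.Ico (0:ℝ) t,
        V x k = 1 + ε * Real.exp (K * x) →
        (∑ i, c i k * Ds s (Pfun (V x i) - Pfun (V x k))) < ε * (Real.exp (K * x) * K) := by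
      intro x _ hfx
      set u : ℝ := ε * Real.exp (K * x) with hu
      have hupos : 0 < u := mul_pos hε (Real.exp_pos _)
      have hV1 : 1 ≤ V x k := by rw [hfx]; linarith
      obtain ⟨hA0, hA2, hAu⟩ := Pfun_key hV1
      have huv : V x k - 1 = u := by rw [hfx]; ring
      have hAs : (2 - Pfun (V x k)) ^ s ≤ (4 / 3) * 2 ^ s * u := by
        apply rpow_bound hs hA0 hA2
        rw [huv] at hAu
        exact hAu
      have hterm : ∀ i ∈ Finset.univ, c i k * Ds s (Pfun (V x i) - Pfun (V x k)) ≤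
          c i k * ((2 - Pfun (V x k)) ^ s) := by
        intro i _
        apply mul_le_mul_of_nonneg_left _ (hnonneg i k)
        exact Ds_le hs (by linarith [Pfun_le_two (V x i)]) hA0
      calc (∑ i, c i k * Ds s (Pfun (V x i) - Pfun (V x k)))
          ≤ ∑ i, c i k * ((2 - Pfun (V x k)) ^ s) := Finset.sum_le_sum hterm
        _ = S * ((2 - Pfun (V x k)) ^ s) := by rw [← Finset.sum_mul]
        _ ≤ S * ((4 / 3) * 2 ^ s * u) := by
            apply mul_le_mul_of_nonneg_left hAs hSnn
        _ < K * u := by rw [hK]; nlinarith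
        _ = ε * (Real.exp (K * x) * K) := by rw [hu]; ring
    have := image_le_of_deriv_right_lt_deriv_boundary hf hf' ha hB bound
      (Set.right_mem_Icc.2 ht)
    exact this
  -- Conclude by letting ε → 0
  have hexp : 0 < Real.exp (K * t) := Real.exp_pos _
  refine le_of_forall_pos_le_add fun ε hε => ?_
  have := main (ε / Real.exp (K * t)) (by positivity)
  calc V t k ≤ 1 + ε / Real.exp (K * t) * Real.exp (K * t) := this
    _ = 1 + ε := by field_simp
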